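/- arXiv:1412.6176 — 2 statements merged into one kernel-verified Lean document; each statement's English description precedes it below -/
import Mathlib

section
/- Let p be a prime, P a finite p-group, and M a nonzero F_p P-module on which P acts uniserially, of length ℓ. For an F_p P-submodule N of M^n, the following are equivalent: (1) N is a direct summand of M^n; (2) the F_p-vector spaces (N + [P,M^n])/[P,M^n] and C_N(P) have the same dimension; (3) there exists a subset Z ⊆ {1,…,n} such that M^n = N ⊕ M_Z. Moreover, if these hold and L is any complement of N as a submodule of M^n, then L ⋊ P is a complement of the normal subgroup N in the semidirect product M^n ⋊ P. -/
variable (p : ℕ) (P : Type) [Group P]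
variable (M : Type) [AddCommGroup M] [Module (ZMod p) M]
  [Module (MonoidAlgebra (ZMod p) P) M]
  [IsScalarTower (ZMod p) (MonoidAlgebra (ZMod p) P) M]

/-- The fixed-point subspace `C_M(P)` of an `F_p P`-module `M`. -/
def fixedPts : Submodule (ZMod p) M where
  carrier := {m | ∀ g : P, MonoidAlgebra.of (ZMod p) P g • m = m}
  add_mem' := by
    intro a b ha hb g
    rw [smul_add, ha g, hb g]
  zero_mem' := by
    intro g
    rw [smul_zero]
  smul_mem' := by
    intro c m hm g
    rw [← algebraMap_smul (MonoidAlgebra (ZMod p) P) c m, ← mul_smul, ← Algebra.commutes,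
      mul_smul, hm g, algebraMap_smul]

/-- The submodule `[P, N]` of an `F_p P`-module `M` spanned by the elements
`g • m - m` with `g ∈ P`, `m ∈ N`. -/
noncomputable def bracketSub (N : Submodule (MonoidAlgebra (ZMod p) P) M) :
    Submodule (MonoidAlgebra (ZMod p) P) M :=
  Submodule.span (MonoidAlgebra (ZMod p) P)
    {x | ∃ g : P, ∃ m ∈ N, x = MonoidAlgebra.of (ZMod p) P g • m - m}

/-- An `F_p P`-module `M` is uniserial if `[P, N]` has (additive) index `p` in `N`
for every nonzero submodule `N` of `M`. -/
def UniserialFpP : Prop :=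
  ∀ N : Submodule (MonoidAlgebra (ZMod p) P) M, N ≠ ⊥ →
    (bracketSub p P M N).toAddSubgroup.relIndex N.toAddSubgroup = p


variable (n : ℕ)

/-- The coordinate submodule `M_Z = {u ∈ M^n : u i = 0 for i ∉ Z}`. -/
def coordSub (Z : Set (Fin n)) :
    Submodule (MonoidAlgebra (ZMod p) P) (Fin n → M) where
  carrier := {u | ∀ i ∉ Z, u i = 0}
  add_mem' := by
    intro a b ha hb i hi
    rw [Pi.add_apply, ha i hi, hb i hi, add_zero]
  zero_mem' := by
    intro i _
    rfl
  smul_mem' := by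
    intro r u hu i hi
    rw [Pi.smul_apply, hu i hi, smul_zero]

/-- The additive automorphism of `M^n` given by the action of `g ∈ P`. -/
noncomputable def pActEquiv (g : P) : (Fin n → M) ≃+ (Fin n → M) where
  toFun x := MonoidAlgebra.of (ZMod p) P g • x
  invFun x := MonoidAlgebra.of (ZMod p) P g⁻¹ • x
  left_inv x := by
    show MonoidAlgebra.of (ZMod p) P g⁻¹ • MonoidAlgebra.of (ZMod p) P g • x = x
    rw [← mul_smul, ← map_mul, inv_mul_cancel, map_one, one_smul]
  right_inv x := by
    show MonoidAlgebra.of (ZMod p) P g • MonoidAlgebra.of (ZMod p) P g⁻¹ • x = x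
    rw [← mul_smul, ← map_mul, mul_inv_cancel, map_one, one_smul]
  map_add' x y := smul_add _ x y

/-- The action of `P` on `Multiplicative (M^n)`, used to form `M^n ⋊ P`. -/
noncomputable def pMulAut : P →* MulAut (Multiplicative (Fin n → M)) :=
  MonoidHom.mk' (fun g => AddEquiv.toMultiplicative (pActEquiv p P M n g)) (by
    intro a b
    apply MulEquiv.ext
    intro x
    show MonoidAlgebra.of (ZMod p) P (a * b) • (x.toAdd)
      = MonoidAlgebra.of (ZMod p) P a • MonoidAlgebra.of (ZMod p) P b • (x.toAdd)
    rw [map_mul, mul_smul])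


/-- The semidirect product `M^n ⋊ P`. -/
abbrev SDP := Multiplicative (Fin n → M) ⋊[pMulAut p P M n] P

/-- A submodule of `M^n` viewed as a subgroup of `M^n ⋊ P`. -/
noncomputable def liftSub (N : Submodule (MonoidAlgebra (ZMod p) P) (Fin n → M)) :
    Subgroup (SDP p P M n) :=
  Subgroup.map SemidirectProduct.inl (AddSubgroup.toSubgroup N.toAddSubgroup)

/-- The subgroup `L ⋊ P` of `M^n ⋊ P` generated by a submodule `L ≤ M^n`
and the complementary copy of `P`. -/
noncomputable def semiCompl (L : Submodule (MonoidAlgebra (ZMod p) P) (Fin n → M)) :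
    Subgroup (SDP p P M n) :=
  Subgroup.map SemidirectProduct.inl (AddSubgroup.toSubgroup L.toAddSubgroup) ⊔
    (SemidirectProduct.inr : P →* SDP p P M n).range


set_option linter.unusedSectionVars false

section Chunk1
open Submodule MonoidAlgebra

local notation "𝔨" => ZMod p
local notation "𝔄" => MonoidAlgebra (ZMod p) P

variable {p P M}

lemma bracketSub_le (N : Submodule 𝔄 M) : bracketSub p P M N ≤ N := by
  rw [bracketSub, span_le]
  rintro x ⟨g, m, hm, rfl⟩
  exact sub_mem (N.smul_mem _ hm) hm

lemma smul_sub_mem_bracketSub {N : Submodule 𝔄 M} {m : M} (hm : m ∈ N) (g : P) :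
    of 𝔨 P g • m - m ∈ bracketSub p P M N :=
  Submodule.subset_span ⟨g, m, hm, rfl⟩

lemma bracketSub_mono {N N' : Submodule 𝔄 M} (h : N ≤ N') :
    bracketSub p P M N ≤ bracketSub p P M N' := by
  apply Submodule.span_mono
  rintro x ⟨g, m, hm, rfl⟩
  exact ⟨g, m, h hm, rfl⟩

lemma bracketSub_sup_le (N N' : Submodule 𝔄 M) :
    bracketSub p P M (N ⊔ N') ≤ bracketSub p P M N ⊔ bracketSub p P M N' := by
  rw [bracketSub, span_le]
  rintro x ⟨g, m, hm, rfl⟩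
  obtain ⟨a, ha, b, hb, rfl⟩ := Submodule.mem_sup.1 hm
  rw [smul_add, add_sub_add_comm]
  exact add_mem_sup (smul_sub_mem_bracketSub ha g) (smul_sub_mem_bracketSub hb g)

end Chunk1

noncomputable def chainS (i : ℕ) : Submodule (MonoidAlgebra (ZMod p) P) M := (bracketSub p P M)^[i] ⊤

section Chunk1b
open Submodule MonoidAlgebra
local notation "𝔨" => ZMod p
local notation "𝔄" => MonoidAlgebra (ZMod p) P
variable {p P M}

@[simp] lemma chainS_zero : chainS p P M 0 = ⊤ := rfl

lemma chainS_succ (i : ℕ) :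
    chainS p P M (i + 1) = bracketSub p P M (chainS p P M i) :=
  Function.iterate_succ_apply' _ _ _

lemma chainS_antitone : Antitone (chainS p P M) := by
  apply antitone_nat_of_succ_le
  intro i
  rw [chainS_succ]
  exact bracketSub_le _

/-- Powers of the augmentation ideal, as `k`-subspaces of the group algebra. -/
noncomputable def Jpow (p : ℕ) (P : Type) [Group P] : ℕ → Submodule (ZMod p) (MonoidAlgebra (ZMod p) P) :=
  fun i => (fun S => Submodule.span (ZMod p)
      {x | ∃ (g : P) (w : MonoidAlgebra (ZMod p) P), w ∈ S ∧ x = (of (ZMod p) P g - 1) * w})^[i] ⊤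

@[simp] lemma Jpow_zero : Jpow p P 0 = ⊤ := rfl

lemma Jpow_succ (i : ℕ) :
    Jpow p P (i + 1) = Submodule.span 𝔨
      {x | ∃ (g : P) (w : 𝔄), w ∈ Jpow p P i ∧ x = (of 𝔨 P g - 1) * w} :=
  Function.iterate_succ_apply' _ _ _

lemma mul_mem_Jpow {i : ℕ} {z : 𝔄} (hz : z ∈ Jpow p P i) (a : 𝔄) :
    z * a ∈ Jpow p P i := by
  induction i generalizing z with
  | zero => exact Submodule.mem_top
  | succ i ih =>
    rw [Jpow_succ] at hz ⊢
    induction hz using Submodule.span_induction with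
    | mem x hx =>
      obtain ⟨g, w, hw, rfl⟩ := hx
      rw [mul_assoc]
      exact Submodule.subset_span ⟨g, w * a, ih hw, rfl⟩
    | zero => rw [zero_mul]; exact zero_mem _
    | add x y _ _ hx hy => rw [add_mul]; exact add_mem hx hy
    | smul c x _ hx => rw [smul_mul_assoc]; exact Submodule.smul_mem _ _ hx

lemma aug_mul_mem_Jpow {i : ℕ} {z : 𝔄} (hz : z ∈ Jpow p P i) (g : P) :
    (of 𝔨 P g - 1) * z ∈ Jpow p P (i + 1) := by
  rw [Jpow_succ]
  exact Submodule.subset_span ⟨g, z, hz, rfl⟩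

/-- Right multiplication by augmentation elements raises the filtration degree. -/
lemma mul_aug_mem_Jpow {i : ℕ} {z : 𝔄} (hz : z ∈ Jpow p P i) (g : P) :
    z * (of 𝔨 P g - 1) ∈ Jpow p P (i + 1) := by
  induction i generalizing z with
  | zero =>
    clear hz
    induction z using MonoidAlgebra.induction_on with
    | of h =>
      have : of 𝔨 P h * (of 𝔨 P g - 1) = (of 𝔨 P (h * g) - 1) * 1 - (of 𝔨 P h - 1) * 1 := by
        simp only [mul_sub, sub_mul, map_mul, mul_one, one_mul]
        abel
      rw [this]
      exact sub_mem (aug_mul_mem_Jpow Submodule.mem_top (h*g)) (aug_mul_mem_Jpow Submodule.mem_top h)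
    | add f f' hf hf' => rw [add_mul]; exact add_mem hf hf'
    | smul c f hf => rw [smul_mul_assoc]; exact Submodule.smul_mem _ _ hf
  | succ i ih =>
    rw [Jpow_succ] at hz
    induction hz using Submodule.span_induction with
    | mem x hx =>
      obtain ⟨h, w, hw, rfl⟩ := hx
      rw [mul_assoc]
      exact aug_mul_mem_Jpow (ih (hw)) h
    | zero => rw [zero_mul]; exact zero_mem _
    | add x y _ _ hx hy => rw [add_mul]; exact add_mem hx hy
    | smul c x _ hx => rw [smul_mul_assoc]; exact Submodule.smul_mem _ _ hx

end Chunk1b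

section Chunk2
open Submodule MonoidAlgebra
local notation "𝔨" => ZMod p
local notation "𝔄" => MonoidAlgebra (ZMod p) P
variable {p P M}

/-- Upgrade a `P`-stable `k`-subspace to an `F_p P`-submodule. -/
def toASub (S : Submodule (ZMod p) M) (hS : ∀ (g : P), ∀ x ∈ S, of (ZMod p) P g • x ∈ S) :
    Submodule (MonoidAlgebra (ZMod p) P) M where
  carrier := S
  add_mem' := S.add_mem
  zero_mem' := S.zero_mem
  smul_mem' := by
    intro a m hm
    show a • m ∈ S
    induction a using MonoidAlgebra.induction_on with
    | of g => exact hS g m hm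
    | add f f' hf hf' => rw [add_smul]; exact S.add_mem hf hf'
    | smul c f hf => rw [smul_assoc]; exact S.smul_mem c hf

lemma mem_toASub {S : Submodule (ZMod p) M} (hS : ∀ (g : P), ∀ x ∈ S, of (ZMod p) P g • x ∈ S)
    {x : M} : x ∈ toASub S hS ↔ x ∈ S := Iff.rfl

lemma aug_smul (g : P) (m : M) : ((of 𝔨 P g - 1 : 𝔄)) • m = of 𝔨 P g • m - m := by
  rw [sub_smul, one_smul]

lemma bracketSub_eq_span (N : Submodule 𝔄 M) :
    (bracketSub p P M N).restrictScalars 𝔨 =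
      Submodule.span 𝔨 {x | ∃ g : P, ∃ m ∈ N, x = of 𝔨 P g • m - m} := by
  apply le_antisymm
  · have hstab : ∀ (g : P), ∀ x ∈ Submodule.span 𝔨 {x | ∃ g : P, ∃ m ∈ N, x = of 𝔨 P g • m - m},
        of 𝔨 P g • x ∈ Submodule.span 𝔨 {x | ∃ g : P, ∃ m ∈ N, x = of 𝔨 P g • m - m} := by
      intro g x hx
      induction hx using Submodule.span_induction with
      | mem x hx =>
        obtain ⟨h, m, hm, rfl⟩ := hx
        have : of 𝔨 P g • (of 𝔨 P h • m - m)
            = (of 𝔨 P (g * h) • m - m) - (of 𝔨 P g • m - m) := by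
          rw [smul_sub, map_mul, mul_smul]
          abel
        rw [this]
        exact sub_mem (Submodule.subset_span ⟨g*h, m, hm, rfl⟩)
          (Submodule.subset_span ⟨g, m, hm, rfl⟩)
      | zero => rw [smul_zero]; exact zero_mem _
      | add x y _ _ hx hy => rw [smul_add]; exact add_mem hx hy
      | smul c x _ hx =>
        rw [smul_comm]
        exact Submodule.smul_mem _ c hx
    have hle : bracketSub p P M N ≤ toASub _ hstab := by
      rw [bracketSub]
      exact Submodule.span_le.2 (fun y hy => Submodule.subset_span hy)
    exact fun x hx => hle hx
  · exact Submodule.span_le.2 (fun y hy => (Submodule.subset_span hy : y ∈ bracketSub p P M N))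

lemma Jpow_smul_mem_chainS' {i : ℕ} {z : 𝔄} (hz : z ∈ Jpow p P i) (m : M) :
    z • m ∈ chainS p P M i := by
  induction i generalizing z with
  | zero => exact Submodule.mem_top
  | succ i ih =>
    rw [Jpow_succ] at hz
    induction hz using Submodule.span_induction with
    | mem x hx =>
      obtain ⟨g, w, hw, rfl⟩ := hx
      rw [chainS_succ, mul_smul, aug_smul]
      exact smul_sub_mem_bracketSub (ih hw) g
    | zero => rw [zero_smul]; exact zero_mem _
    | add x y _ _ hx hy => rw [add_smul]; exact add_mem hx hy
    | smul c x _ hx =>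
      rw [smul_assoc]
      exact ((chainS p P M (i+1)).restrictScalars 𝔨).smul_mem c hx

lemma Jpow_smul_mem_chainS_aux (j : ℕ) : ∀ (i : ℕ) (z : 𝔄), z ∈ Jpow p P i →
    ∀ (y : M), y ∈ chainS p P M j → z • y ∈ chainS p P M (i + j) := by
  induction j with
  | zero => exact fun i z hz y _ => Jpow_smul_mem_chainS' hz y
  | succ j ih =>
    intro i z hz y hy
    rw [chainS_succ, bracketSub] at hy
    have H : ∀ w ∈ Submodule.span 𝔄 {x | ∃ g : P, ∃ m ∈ chainS p P M j, x = of 𝔨 P g • m - m},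
        ∀ z' ∈ (Jpow p P i), z' • w ∈ chainS p P M (i + (j+1)) := by
      intro w hw
      refine Submodule.span_induction ?_ ?_ ?_ ?_ hw
      · rintro x ⟨g, m, hm, rfl⟩ z' hz'
        have e : z' • (of 𝔨 P g • m - m) = (z' * (of 𝔨 P g - 1)) • m := by
          rw [mul_smul, aug_smul]
        rw [e, show i + (j+1) = (i+1) + j from by ring]
        exact ih (i+1) _ (mul_aug_mem_Jpow hz' g) m hm
      · intro z' _
        rw [smul_zero]; exact zero_mem _
      · intro u v _ _ hu hv z' hz'
        rw [smul_add]; exact add_mem (hu z' hz') (hv z' hz')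
      · intro a u _ hu z' hz'
        rw [← mul_smul]; exact hu (z' * a) (mul_mem_Jpow hz' a)
    exact H y hy z hz

lemma Jpow_smul_mem_chainS {i j : ℕ} {z : 𝔄} (hz : z ∈ Jpow p P i) {y : M}
    (hy : y ∈ chainS p P M j) : z • y ∈ chainS p P M (i + j) :=
  Jpow_smul_mem_chainS_aux j i z hz y hy

lemma exists_smul_ne_zero_of_chainS_ne_bot {i : ℕ} (h : chainS p P M i ≠ ⊥) :
    ∃ z ∈ Jpow p P i, ∃ m : M, z • m ≠ 0 := by
  set T : ℕ → Submodule 𝔨 M :=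
    fun i => Submodule.span 𝔨 {x | ∃ z ∈ Jpow p P i, ∃ m : M, x = z • m} with hT
  have key : ∀ i, (chainS p P M i).restrictScalars 𝔨 ≤ T i := by
    intro i
    induction i with
    | zero =>
      intro m _
      exact Submodule.subset_span ⟨1, Submodule.mem_top, m, (one_smul _ m).symm⟩
    | succ i ih =>
      intro x hx
      have hx' : x ∈ (bracketSub p P M (chainS p P M i)).restrictScalars 𝔨 := by
        rw [← chainS_succ]; exact hx
      rw [bracketSub_eq_span] at hx'
      refine Submodule.span_le.2 ?_ hx'
      rintro y ⟨g, m, hm, rfl⟩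
      have hmT : m ∈ T i := ih hm
      clear hm
      induction hmT using Submodule.span_induction with
      | mem x hx =>
        obtain ⟨z, hz, m', rfl⟩ := hx
        refine Submodule.subset_span ⟨(of 𝔨 P g - 1) * z, aug_mul_mem_Jpow hz g, m', ?_⟩
        rw [mul_smul, aug_smul]
      | zero => rw [smul_zero, sub_zero]; exact zero_mem _
      | add u v _ _ hu hv =>
        rw [smul_add, add_sub_add_comm]
        exact add_mem hu hv
      | smul c u _ hu =>
        rw [smul_comm, ← smul_sub]
        exact Submodule.smul_mem _ c hu
  obtain ⟨x, hx, hxne⟩ := Submodule.exists_mem_ne_zero_of_ne_bot h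
  have hTne : T i ≠ ⊥ := by
    intro hbot
    exact hxne (by simpa [hbot] using key i hx)
  obtain ⟨y, hy, hyne⟩ : ∃ y ∈ {x | ∃ z ∈ Jpow p P i, ∃ m : M, x = z • m}, y ≠ 0 := by
    by_contra hcon
    push_neg at hcon
    exact hTne (Submodule.span_eq_bot.2 hcon)
  obtain ⟨z, hz, m, rfl⟩ := hy
  exact ⟨z, hz, m, hyne⟩

end Chunk2

section Chunk3
open Submodule MonoidAlgebra Module
local notation "𝔨" => ZMod p
local notation "𝔄" => MonoidAlgebra (ZMod p) P
variable {p P M}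

/-- Fixed point theorem: a nonzero finite module over a finite `p`-group has a
nonzero fixed vector. -/
lemma exists_fixed_of_ne_bot (hp : p.Prime) [Finite P] (hP : IsPGroup p P)
    [Module.Finite (ZMod p) M] {X : Submodule 𝔄 M} (hX : X ≠ ⊥) :
    ∃ x : M, x ∈ X ∧ x ≠ 0 ∧ ∀ g : P, of 𝔨 P g • x = x := by
  haveI : Fact p.Prime := ⟨hp⟩
  haveI : Finite M := Module.finite_of_finite (ZMod p)
  let X' := X.restrictScalars 𝔨
  letI : SMul P ↥X' := ⟨fun g x => ⟨of 𝔨 P g • (x : M), X.smul_mem _ x.2⟩⟩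
  have smul_def : ∀ (g : P) (x : ↥X'), ((g • x : ↥X') : M) = of 𝔨 P g • (x : M) :=
    fun g x => rfl
  letI : MulAction P ↥X' :=
    { one_smul := by
        intro x
        apply Subtype.ext
        rw [smul_def, map_one, one_smul]
      mul_smul := by
        intro g h x
        apply Subtype.ext
        simp only [smul_def, map_mul, mul_smul] }
  haveI : Finite ↥X' := Subtype.finite
  have hmod := IsPGroup.card_modEq_card_fixedPoints hP ↥X'
  haveI : Fintype ↥X' := Fintype.ofFinite _
  have hcard : Nat.card ↥X' = p ^ finrank 𝔨 ↥X' := by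
    rw [Nat.card_eq_fintype_card, card_eq_pow_finrank (K := ZMod p), ZMod.card]
  have hrank : 0 < finrank 𝔨 ↥X' := by
    haveI : Nontrivial ↥X' := by
      refine Submodule.nontrivial_iff_ne_bot.2 (fun h => hX ?_)
      rw [Submodule.eq_bot_iff]
      intro x hx
      exact (Submodule.eq_bot_iff X').1 h x hx
    exact finrank_pos
  have hdvd : p ∣ Nat.card ↥X' := by
    rw [hcard]
    exact dvd_pow_self p hrank.ne'
  have hdvd2 : p ∣ Nat.card (MulAction.fixedPoints P ↥X') := by
    have := (Nat.modEq_zero_iff_dvd).2 hdvd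
    exact (Nat.modEq_zero_iff_dvd).1 (hmod.symm.trans this)
  by_contra hcon
  push_neg at hcon
  have hsub : (MulAction.fixedPoints P ↥X') ⊆ {(0 : ↥X')} := by
    intro x hx
    have : (x : M) ∈ X := x.2
    rcases eq_or_ne (x : M) 0 with h0 | h0
    · have : x = (0 : ↥X') := Subtype.ext (by rw [h0]; rfl)
      simp [Set.mem_singleton_iff, this]
    · obtain ⟨g, hg⟩ := hcon (x : M) this h0
      exact absurd (congrArg Subtype.val (hx g)) hg
  have h1 : Nat.card (MulAction.fixedPoints P ↥X') ≤ 1 := by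
    rw [Nat.card_coe_set_eq]
    calc (MulAction.fixedPoints P ↥X').ncard ≤ ({0} : Set ↥X').ncard :=
          Set.ncard_le_ncard hsub (Set.finite_singleton _)
      _ = 1 := Set.ncard_singleton _
  have h0 : 0 < Nat.card (MulAction.fixedPoints P ↥X') := by
    rw [Nat.card_coe_set_eq, Set.ncard_pos (Set.toFinite _)]
    exact ⟨0, fun g => Subtype.ext (by rw [smul_def, ZeroMemClass.coe_zero, smul_zero])⟩
  have := Nat.le_of_dvd h0 hdvd2
  have := hp.two_le
  omega

lemma card_submodule_eq_pow (hp : p.Prime) [Module.Finite (ZMod p) M]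
    (S : Submodule 𝔨 M) : Nat.card ↥S = p ^ finrank 𝔨 ↥S := by
  haveI : Fact p.Prime := ⟨hp⟩
  haveI : Finite M := Module.finite_of_finite (ZMod p)
  haveI : Fintype ↥S := Fintype.ofFinite _
  rw [Nat.card_eq_fintype_card, card_eq_pow_finrank (K := ZMod p), ZMod.card]

lemma finrank_eq_bracket_succ (hp : p.Prime) [Module.Finite (ZMod p) M]
    (huni : UniserialFpP p P M) {N : Submodule 𝔄 M} (hN : N ≠ ⊥) :
    finrank 𝔨 (N.restrictScalars 𝔨) =
      finrank 𝔨 ((bracketSub p P M N).restrictScalars 𝔨) + 1 := by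
  haveI : Fact p.Prime := ⟨hp⟩
  have hle : (bracketSub p P M N).toAddSubgroup ≤ N.toAddSubgroup := by
    intro x hx
    exact bracketSub_le N hx
  have hrel := huni N hN
  unfold AddSubgroup.relIndex at hrel
  have hmul := AddSubgroup.index_mul_card
    ((bracketSub p P M N).toAddSubgroup.addSubgroupOf N.toAddSubgroup)
  rw [hrel] at hmul
  have hcard1 : Nat.card ↥((bracketSub p P M N).toAddSubgroup.addSubgroupOf N.toAddSubgroup)
      = Nat.card ↥((bracketSub p P M N).restrictScalars 𝔨) :=
    Nat.card_congr (AddSubgroup.addSubgroupOfEquivOfLe hle).toEquiv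
  have hcard2 : Nat.card ↥(N.toAddSubgroup) = Nat.card ↥(N.restrictScalars 𝔨) := rfl
  rw [hcard1, hcard2, card_submodule_eq_pow hp, card_submodule_eq_pow hp] at hmul
  have : p ^ (finrank 𝔨 ((bracketSub p P M N).restrictScalars 𝔨) + 1)
      = p ^ (finrank 𝔨 (N.restrictScalars 𝔨)) := by
    rw [pow_succ]
    rw [← hmul]
    ring
  exact (Nat.pow_right_injective hp.two_le this).symm

end Chunk3

section Chunk4
open Submodule MonoidAlgebra Module
local notation "𝔨" => ZMod p
local notation "𝔄" => MonoidAlgebra (ZMod p) P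
variable {p P M}

lemma restrictScalars_toASub (S : Submodule (ZMod p) M)
    (hS : ∀ (g : P), ∀ x ∈ S, of (ZMod p) P g • x ∈ S) :
    (toASub S hS).restrictScalars 𝔨 = S :=
  SetLike.ext fun _ => Iff.rfl

lemma chainS_finrank (hp : p.Prime) [Module.Finite (ZMod p) M]
    (huni : UniserialFpP p P M) :
    ∀ i ≤ finrank 𝔨 M, finrank 𝔨 ((chainS p P M i).restrictScalars 𝔨)
      = finrank 𝔨 M - i := by
  haveI : Fact p.Prime := ⟨hp⟩
  intro i
  induction i with
  | zero =>
    intro _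
    rw [chainS_zero, Submodule.restrictScalars_top, finrank_top]
    omega
  | succ i ih =>
    intro hi
    have hi' : i ≤ finrank 𝔨 M := le_of_lt hi
    have hrank := ih (le_of_lt hi)
    have hne : chainS p P M i ≠ ⊥ := by
      intro hbot
      rw [hbot] at hrank
      rw [Submodule.restrictScalars_bot, finrank_bot] at hrank
      omega
    have := finrank_eq_bracket_succ hp huni hne
    rw [← chainS_succ] at this
    omega

lemma chainS_ne_bot (hp : p.Prime) [Module.Finite (ZMod p) M]
    (huni : UniserialFpP p P M) {i : ℕ} (hi : i < finrank 𝔨 M) :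
    chainS p P M i ≠ ⊥ := by
  haveI : Fact p.Prime := ⟨hp⟩
  intro hbot
  have := chainS_finrank hp huni i (le_of_lt hi)
  rw [hbot, Submodule.restrictScalars_bot, finrank_bot] at this
  omega

lemma chainS_finrank_eq_bot (hp : p.Prime) [Module.Finite (ZMod p) M]
    (huni : UniserialFpP p P M) :
    chainS p P M (finrank 𝔨 M) = ⊥ := by
  haveI : Fact p.Prime := ⟨hp⟩
  haveI : Fact (1 < p) := ⟨hp.one_lt⟩
  have := chainS_finrank hp huni (finrank 𝔨 M) le_rfl
  rw [Nat.sub_self] at this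
  have hbot : (chainS p P M (finrank 𝔨 M)).restrictScalars 𝔨 = ⊥ :=
    Submodule.finrank_eq_zero.1 this
  rwa [Submodule.restrictScalars_eq_bot_iff] at hbot

/-- The fixed points as an `F_p P`-submodule. -/
def fixedSubA : Submodule 𝔄 M :=
  toASub (fixedPts p P M) (fun g x hx => by
    show of 𝔨 P g • x ∈ fixedPts p P M
    rw [show of 𝔨 P g • x = x from hx g]
    exact hx)

lemma finrank_fixedPts (hp : p.Prime) [Finite P] (hP : IsPGroup p P)
    [Module.Finite (ZMod p) M] [Nontrivial M] (huni : UniserialFpP p P M) :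
    finrank 𝔨 ↥(fixedPts p P M) = 1 := by
  haveI : Fact p.Prime := ⟨hp⟩
  have hCne : (fixedSubA (p := p) (P := P) (M := M)) ≠ ⊥ := by
    have htop : (⊤ : Submodule 𝔄 M) ≠ ⊥ := by
      intro h
      obtain ⟨x, hx⟩ := exists_ne (0 : M)
      exact hx ((Submodule.eq_bot_iff _).1 h x Submodule.mem_top)
    obtain ⟨x, _, hxne, hxfix⟩ := exists_fixed_of_ne_bot (M := M) hp hP (X := ⊤) htop
    exact Submodule.ne_bot_iff _ |>.2 ⟨x, hxfix, hxne⟩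
  have hbr : bracketSub p P M (fixedSubA (p := p) (P := P) (M := M)) = ⊥ := by
    rw [bracketSub, Submodule.span_eq_bot]
    rintro x ⟨g, m, hm, rfl⟩
    exact sub_eq_zero_of_eq (hm g)
  have hrel := huni _ hCne
  rw [hbr] at hrel
  have : (⊥ : Submodule 𝔄 M).toAddSubgroup = ⊥ := by
    ext x; simp [Submodule.mem_toAddSubgroup]
  rw [this, AddSubgroup.relIndex_bot_left] at hrel
  have hcard : Nat.card ↥((fixedSubA (p := p) (P := P) (M := M)).restrictScalars 𝔨) = p := hrel
  rw [card_submodule_eq_pow hp] at hcard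
  have h1 : finrank 𝔨 ↥((fixedSubA (p := p) (P := P) (M := M)).restrictScalars 𝔨) = 1 := by
    have := Nat.pow_right_injective hp.two_le (hcard.trans (pow_one p).symm)
    exact this
  have heq : (fixedSubA (p := p) (P := P) (M := M)).restrictScalars 𝔨 = fixedPts p P M :=
    restrictScalars_toASub _ _
  rwa [heq] at h1

lemma exists_z (hp : p.Prime) [Finite P] (hP : IsPGroup p P)
    [Module.Finite (ZMod p) M] [Nontrivial M] (huni : UniserialFpP p P M) :
    ∃ z : 𝔄, (∀ m : M, z • m ∈ fixedPts p P M) ∧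
      (∀ m : M, z • m = 0 ↔ m ∈ chainS p P M 1) := by
  haveI : Fact p.Prime := ⟨hp⟩
  set ℓ := finrank 𝔨 M with hℓdef
  have hℓ : 0 < ℓ := finrank_pos
  have hne : chainS p P M (ℓ-1) ≠ ⊥ := chainS_ne_bot hp huni (by omega)
  obtain ⟨z, hz, m₀, hm₀⟩ := exists_smul_ne_zero_of_chainS_ne_bot hne
  have hfix : ∀ m : M, z • m ∈ fixedPts p P M := by
    intro m
    have hmem := Jpow_smul_mem_chainS' hz m
    intro g
    have : of 𝔨 P g • (z • m) - z • m ∈ chainS p P M ℓ := by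
      rw [show ℓ = (ℓ-1) + 1 from by omega, chainS_succ]
      exact smul_sub_mem_bracketSub hmem g
    rw [chainS_finrank_eq_bot hp huni] at this
    rw [← sub_eq_zero]
    exact this
  have hkill : ∀ y ∈ chainS p P M 1, z • y = 0 := by
    intro y hy
    have := Jpow_smul_mem_chainS hz hy
    rw [show ℓ - 1 + 1 = ℓ from by omega, chainS_finrank_eq_bot hp huni] at this
    exact this
  let κ : M →ₗ[𝔨] M :=
    { toFun := fun m => z • m
      map_add' := fun x y => smul_add z x y
      map_smul' := fun c x => (smul_comm c z x).symm }
  have hκ : ∀ m : M, κ m = z • m := fun _ => rfl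
  have hkerle : (chainS p P M 1).restrictScalars 𝔨 ≤ LinearMap.ker κ := by
    intro y hy
    rw [LinearMap.mem_ker, hκ]
    exact hkill y hy
  have hrange : LinearMap.range κ ≤ (chainS p P M (ℓ-1)).restrictScalars 𝔨 := by
    rintro _ ⟨m, rfl⟩
    exact Jpow_smul_mem_chainS' hz m
  have hrange_ne : LinearMap.range κ ≠ ⊥ := by
    intro hbot
    apply hm₀
    have : κ m₀ ∈ LinearMap.range κ := ⟨m₀, rfl⟩
    rw [hbot] at this
    simpa [hκ] using this
  have hrange_rank : finrank 𝔨 ↥(LinearMap.range κ) = 1 := by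
    have hle : finrank 𝔨 ↥(LinearMap.range κ) ≤ 1 := by
      have := Submodule.finrank_mono hrange
      rwa [chainS_finrank hp huni (ℓ-1) (by omega),
        show ℓ - (ℓ-1) = 1 from by omega] at this
    have hge : 0 < finrank 𝔨 ↥(LinearMap.range κ) := by
      rcases Nat.eq_zero_or_pos (finrank 𝔨 ↥(LinearMap.range κ)) with h | h
      · exact absurd (Submodule.finrank_eq_zero.1 h) hrange_ne
      · exact h
    omega
  have hkerrank : finrank 𝔨 ↥(LinearMap.ker κ) = ℓ - 1 := by
    have := LinearMap.finrank_range_add_finrank_ker κ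
    rw [hrange_rank] at this
    omega
  have hker : (chainS p P M 1).restrictScalars 𝔨 = LinearMap.ker κ := by
    apply Submodule.eq_of_le_of_finrank_le hkerle
    rw [hkerrank, chainS_finrank hp huni 1 (by omega)]
  refine ⟨z, hfix, fun m => ?_⟩
  constructor
  · intro h0
    have : m ∈ LinearMap.ker κ := by rw [LinearMap.mem_ker, hκ]; exact h0
    rw [← hker] at this
    exact this
  · intro hm
    exact hkill m hm

end Chunk4

section Chunk5
open Submodule MonoidAlgebra Module
local notation "𝔨" => ZMod p
local notation "𝔄" => MonoidAlgebra (ZMod p) P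
variable {p P M} {n : ℕ}

/-- The product submodule `{u | ∀ j, u j ∈ N}` of `M^n`. -/
def piSub (N : Submodule (MonoidAlgebra (ZMod p) P) M) :
    Submodule (MonoidAlgebra (ZMod p) P) (Fin n → M) where
  carrier := {u | ∀ j, u j ∈ N}
  add_mem' := fun ha hb j => N.add_mem (ha j) (hb j)
  zero_mem' := fun j => N.zero_mem
  smul_mem' := fun a u hu j => by
    rw [Pi.smul_apply]
    exact N.smul_mem a (hu j)

lemma mem_piSub {N : Submodule 𝔄 M} {u : Fin n → M} :
    u ∈ (piSub N : Submodule 𝔄 (Fin n → M)) ↔ ∀ j, u j ∈ N := Iff.rfl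

/-- The `k`-version. -/
def piSubK (S : Submodule (ZMod p) M) : Submodule (ZMod p) (Fin n → M) where
  carrier := {u | ∀ j, u j ∈ S}
  add_mem' := fun ha hb j => S.add_mem (ha j) (hb j)
  zero_mem' := fun j => S.zero_mem
  smul_mem' := fun c u hu j => by
    rw [Pi.smul_apply]
    exact S.smul_mem c (hu j)

lemma restrictScalars_piSub (N : Submodule 𝔄 M) :
    (piSub N : Submodule 𝔄 (Fin n → M)).restrictScalars 𝔨 = piSubK (N.restrictScalars 𝔨) :=
  SetLike.ext fun _ => Iff.rfl

/-- `piSubK S` is isomorphic to `Fin n → S`. -/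
noncomputable def piSubKEquiv (S : Submodule (ZMod p) M) :
    ↥(piSubK (n := n) S) ≃ₗ[𝔨] (Fin n → ↥S) where
  toFun u := fun j => ⟨u.1 j, u.2 j⟩
  invFun v := ⟨fun j => v j, fun j => (v j).2⟩
  left_inv u := rfl
  right_inv v := rfl
  map_add' u v := rfl
  map_smul' c u := rfl

lemma finrank_piSubK (hp : p.Prime) [Module.Finite (ZMod p) M] (S : Submodule (ZMod p) M) :
    finrank 𝔨 ↥(piSubK (n := n) S) = n * finrank 𝔨 ↥S := by
  haveI : Fact p.Prime := ⟨hp⟩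
  rw [LinearEquiv.finrank_eq (piSubKEquiv S), Module.finrank_pi_fintype,
    Finset.sum_const, Finset.card_univ, Fintype.card_fin, smul_eq_mul]

lemma single_mem_piSub {N : Submodule 𝔄 M} {m : M} (hm : m ∈ N) (j : Fin n) :
    Pi.single j m ∈ (piSub N : Submodule 𝔄 (Fin n → M)) := by
  intro i
  rcases eq_or_ne i j with rfl | hij
  · rw [Pi.single_eq_same]; exact hm
  · rw [Pi.single_eq_of_ne hij]; exact N.zero_mem

lemma bracketSub_piSub (N : Submodule 𝔄 M) :
    bracketSub p P (Fin n → M) (piSub N) = piSub (bracketSub p P M N) := by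
  apply le_antisymm
  · rw [bracketSub, Submodule.span_le]
    rintro x ⟨g, u, hu, rfl⟩
    intro j
    rw [Pi.sub_apply, Pi.smul_apply]
    exact smul_sub_mem_bracketSub (hu j) g
  · intro u hu
    have : u = ∑ j : Fin n, Pi.single j (u j) := by
      rw [Finset.univ_sum_single u]
    rw [this]
    apply Submodule.sum_mem
    intro j _
    -- u j ∈ bracketSub N, push through single
    have hj := hu j
    have hmap : Submodule.map (LinearMap.single 𝔄 (fun _ : Fin n => M) j)
        (bracketSub p P M N) ≤ bracketSub p P (Fin n → M) (piSub N) := by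
      rw [bracketSub, Submodule.map_span, Submodule.span_le]
      rintro x ⟨y, ⟨g, m, hm, rfl⟩, rfl⟩
      apply Submodule.subset_span
      refine ⟨g, Pi.single j m, single_mem_piSub hm j, ?_⟩
      rw [map_sub, map_smul]
      rfl
    exact hmap ⟨u j, hj, rfl⟩

lemma piSub_top : (piSub ⊤ : Submodule 𝔄 (Fin n → M)) = ⊤ :=
  eq_top_iff.2 (fun u _ j => Submodule.mem_top)

lemma piSub_bot : (piSub ⊥ : Submodule 𝔄 (Fin n → M)) = ⊥ := by
  rw [Submodule.eq_bot_iff]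
  intro u hu
  funext j
  exact hu j

lemma chainS_pi (i : ℕ) :
    chainS p P (Fin n → M) i = piSub (chainS p P M i) := by
  induction i with
  | zero => rw [chainS_zero, chainS_zero, piSub_top]
  | succ i ih => rw [chainS_succ, chainS_succ, ih, bracketSub_piSub]

lemma mem_fixedPts_pi {u : Fin n → M} :
    u ∈ fixedPts p P (Fin n → M) ↔ ∀ j, u j ∈ fixedPts p P M := by
  constructor
  · intro h j g
    have := congrFun (h g) j
    rwa [Pi.smul_apply] at this
  · intro h g
    funext j
    rw [Pi.smul_apply]
    exact h j g

lemma fixedPts_pi_eq : fixedPts p P (Fin n → M) = piSubK (fixedPts p P M) :=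
  SetLike.ext fun _ => mem_fixedPts_pi

end Chunk5

section Chunk6
open Submodule Module

variable {K : Type} [Field K]

/-- If two linear maps have the same kernel, images of any submodule have equal rank. -/
lemma finrank_map_eq_of_ker_eq {V W W' : Type} [AddCommGroup V] [Module K V]
    [AddCommGroup W] [Module K W] [AddCommGroup W'] [Module K W']
    [FiniteDimensional K V]
    (f : V →ₗ[K] W) (g : V →ₗ[K] W') (h : LinearMap.ker f = LinearMap.ker g)
    (X : Submodule K V) :
    finrank K ↥(X.map f) = finrank K ↥(X.map g) := by
  have hf : X.map f = LinearMap.range (f.comp X.subtype) := by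
    rw [LinearMap.range_comp, Submodule.range_subtype]
  have hg : X.map g = LinearMap.range (g.comp X.subtype) := by
    rw [LinearMap.range_comp, Submodule.range_subtype]
  have hkf : LinearMap.ker (f.comp X.subtype) = LinearMap.ker (g.comp X.subtype) := by
    rw [LinearMap.ker_comp, LinearMap.ker_comp, h]
  have rf := LinearMap.finrank_range_add_finrank_ker (f.comp X.subtype)
  have rg := LinearMap.finrank_range_add_finrank_ker (g.comp X.subtype)
  rw [hkf] at rf
  rw [hf, hg]
  omega

lemma submodule_of_line {Q : Type} [AddCommGroup Q] [Module K Q]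
    {D X : Submodule K Q} [FiniteDimensional K ↥D] (hD : finrank K ↥D ≤ 1) (hX : X ≤ D) :
    X = ⊥ ∨ X = D := by
  rcases Nat.eq_zero_or_pos (finrank K ↥X) with h | h
  · left
    haveI : Module.Finite K ↥X := Submodule.finiteDimensional_of_le hX
    exact Submodule.finrank_eq_zero.1 h
  · right
    exact Submodule.eq_of_le_of_finrank_le hX (le_trans hD h)

/-- Complementing a subspace by a coordinate subspace: if `Q` is spanned by lines
`D i`, any subspace `T` has a complement of the form `⨆ i ∈ Z, D i`. -/
lemma exists_coord_compl {Q : Type} [AddCommGroup Q] [Module K Q] [FiniteDimensional K Q]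
    {ι : Type} [Fintype ι] (D : ι → Submodule K Q) (hD : ∀ i, finrank K ↥(D i) ≤ 1)
    (hsup : (⨆ i, D i) = ⊤) (T : Submodule K Q) :
    ∃ Z : Finset ι, (T ⊓ ⨆ i ∈ Z, D i) = ⊥ ∧ (T ⊔ ⨆ i ∈ Z, D i) = ⊤ := by
  classical
  set S : Set (Finset ι) := {Z | (T ⊓ ⨆ i ∈ Z, D i) = ⊥} with hS
  have hne : S.Nonempty := by
    refine ⟨∅, ?_⟩
    simp [hS]
  obtain ⟨Z, hZS, hZmax⟩ := Set.Finite.exists_maximalFor Finset.card S (Set.toFinite S) hne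
  refine ⟨Z, hZS, ?_⟩
  set W := ⨆ i ∈ Z, D i with hW
  by_contra hns
  have hex : ∃ i, ¬ D i ≤ T ⊔ W := by
    by_contra hc
    push_neg at hc
    apply hns
    apply top_unique
    rw [← hsup]
    exact iSup_le fun i => hc i
  obtain ⟨i, hi⟩ := hex
  have hiZ : i ∉ Z := by
    intro hiZ
    exact hi (le_trans (le_biSup D hiZ) le_sup_right)
  have hDi : D i ⊓ (T ⊔ W) = ⊥ := by
    rcases submodule_of_line (hD i) (inf_le_left : D i ⊓ (T ⊔ W) ≤ D i) with h | h
    · exact h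
    · exfalso
      apply hi
      rw [← h]
      exact inf_le_right
  have hZ' : (insert i Z : Finset ι) ∈ S := by
    rw [hS, Set.mem_setOf_eq, Finset.iSup_insert]
    rw [Submodule.eq_bot_iff]
    intro x hx
    obtain ⟨hxT, hxW⟩ := Submodule.mem_inf.1 hx
    rw [sup_comm] at hxW
    obtain ⟨w, hw, d, hd, hwd⟩ := Submodule.mem_sup.1 hxW
    have hdmem : d ∈ D i ⊓ (T ⊔ W) := by
      refine Submodule.mem_inf.2 ⟨hd, ?_⟩
      have : d = x - w := by rw [← hwd]; abel
      rw [this]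
      exact Submodule.sub_mem _ (le_sup_left (a := T) (b := W) hxT)
        (le_sup_right (a := T) (b := W) hw)
    rw [hDi] at hdmem
    have hd0 : d = 0 := hdmem
    have hxTW : x ∈ T ⊓ W := by
      refine Submodule.mem_inf.2 ⟨hxT, ?_⟩
      rw [← hwd, hd0, add_zero]
      exact hw
    rw [hZS] at hxTW
    exact hxTW
  have hcard := hZmax hZ' (Finset.card_le_card (Finset.subset_insert i Z))
  rw [Finset.card_insert_of_notMem hiZ] at hcard
  omega

end Chunk6

section Chunk7
open Submodule MonoidAlgebra Module
local notation "𝔨" => ZMod p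
local notation "𝔄" => MonoidAlgebra (ZMod p) P
variable {p P M}

lemma restrictScalars_sup (N L : Submodule 𝔄 M) :
    (N ⊔ L).restrictScalars 𝔨 = N.restrictScalars 𝔨 ⊔ L.restrictScalars 𝔨 := by
  apply le_antisymm
  · intro x hx
    obtain ⟨a, ha, b, hb, rfl⟩ := Submodule.mem_sup.1 (show x ∈ N ⊔ L from hx)
    exact Submodule.add_mem_sup ha hb
  · rw [sup_le_iff]
    exact ⟨fun x hx => (le_sup_left : N ≤ N ⊔ L) hx,
      fun x hx => (le_sup_right : L ≤ N ⊔ L) hx⟩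

lemma chainS_one : chainS p P M 1 = bracketSub p P M ⊤ := by
  rw [show (1 : ℕ) = 0 + 1 from rfl, chainS_succ, chainS_zero]

/-- Nakayama-type lemma. -/
lemma eq_top_of_sup_bracket (hbot : ∃ i, chainS p P M i = ⊥) {W : Submodule 𝔄 M}
    (h : W ⊔ chainS p P M 1 = ⊤) : W = ⊤ := by
  have step : ∀ i, W ⊔ chainS p P M (i+1) = ⊤ := by
    intro i
    induction i with
    | zero => exact h
    | succ i ih =>
      have h1 : chainS p P M 1 ≤ W ⊔ chainS p P M (i+2) := by
        have he : chainS p P M 1 = bracketSub p P M (W ⊔ chainS p P M (i+1)) := by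
          rw [ih, chainS_one]
        rw [he]
        refine le_trans (bracketSub_sup_le _ _) (sup_le_sup (bracketSub_le W) ?_)
        rw [← chainS_succ]
      apply top_unique
      calc (⊤ : Submodule 𝔄 M) = W ⊔ chainS p P M 1 := h.symm
        _ ≤ W ⊔ (W ⊔ chainS p P M (i+2)) := sup_le_sup_left h1 W
        _ = W ⊔ chainS p P M (i+2) := by rw [← sup_assoc, sup_idem]
  obtain ⟨i, hi⟩ := hbot
  cases i with
  | zero =>
    have htb : (⊤ : Submodule 𝔄 M) = ⊥ := by rw [← chainS_zero (p := p) (P := P) (M := M), hi]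
    exact le_antisymm le_top (htb ▸ bot_le)
  | succ i =>
    have := step i
    rwa [hi, sup_bot_eq] at this

end Chunk7

section Chunk8
open Submodule MonoidAlgebra Module
local notation "𝔨" => ZMod p
local notation "𝔄" => MonoidAlgebra (ZMod p) P
variable {p P M}

lemma module_part (hp : p.Prime) [Finite P] (hP : IsPGroup p P)
    [Module.Finite (ZMod p) M] [Nontrivial M] (huni : UniserialFpP p P M)
    (n : ℕ) (N : Submodule 𝔄 (Fin n → M)) :
    ((∃ L : Submodule 𝔄 (Fin n → M), N ⊓ L = ⊥ ∧ N ⊔ L = ⊤) ↔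
      finrank 𝔨 ↥(Submodule.map
          ((bracketSub p P (Fin n → M) (⊤ : Submodule 𝔄 (Fin n → M))).restrictScalars 𝔨).mkQ
          (N.restrictScalars 𝔨))
        = finrank 𝔨 ↥(fixedPts p P (Fin n → M) ⊓ N.restrictScalars 𝔨)) ∧
    ((∃ L : Submodule 𝔄 (Fin n → M), N ⊓ L = ⊥ ∧ N ⊔ L = ⊤) ↔
      (∃ Z : Set (Fin n), N ⊓ coordSub p P M n Z = ⊥ ∧ N ⊔ coordSub p P M n Z = ⊤)) := by
  classical
  haveI : Fact p.Prime := ⟨hp⟩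
  set ℓ := finrank 𝔨 M with hldef
  have hlpos : 0 < ℓ := finrank_pos
  obtain ⟨z, hzfix, hzker⟩ := exists_z (M := M) hp hP huni
  set J : Submodule 𝔨 (Fin n → M) :=
    (bracketSub p P (Fin n → M) (⊤ : Submodule 𝔄 (Fin n → M))).restrictScalars 𝔨 with hJ
  have hJ_pi : J = piSubK ((chainS p P M 1).restrictScalars 𝔨) := by
    rw [hJ, ← chainS_one, chainS_pi, restrictScalars_piSub]
  set q := J.mkQ with hq
  let ζ : (Fin n → M) →ₗ[𝔨] (Fin n → M) :=
    { toFun := fun u => z • u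
      map_add' := fun u v => smul_add z u v
      map_smul' := fun c u => (smul_comm c z u).symm }
  have hζ : ∀ u, ζ u = z • u := fun _ => rfl
  have hζj : ∀ (u : Fin n → M) (j : Fin n), ζ u j = z • (u j) := fun _ _ => rfl
  have hkerζ : LinearMap.ker ζ = J := by
    ext u
    rw [LinearMap.mem_ker, hζ, hJ_pi]
    constructor
    · intro h0 j
      exact (hzker (u j)).1 (by rw [← Pi.smul_apply, h0]; rfl)
    · intro hmem
      funext j
      rw [Pi.smul_apply]
      exact (hzker (u j)).2 (hmem j)
  have hkerq : LinearMap.ker q = J := Submodule.ker_mkQ J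
  have ht : ∀ (X : Submodule 𝔄 (Fin n → M)),
      finrank 𝔨 ↥(Submodule.map q (X.restrictScalars 𝔨))
        = finrank 𝔨 ↥(Submodule.map ζ (X.restrictScalars 𝔨)) :=
    fun X => finrank_map_eq_of_ker_eq q ζ (by rw [hkerq, hkerζ]) _
  have hζle : ∀ (X : Submodule 𝔄 (Fin n → M)),
      Submodule.map ζ (X.restrictScalars 𝔨) ≤
        fixedPts p P (Fin n → M) ⊓ X.restrictScalars 𝔨 := by
    rintro X x ⟨u, hu, rfl⟩
    refine Submodule.mem_inf.2 ⟨?_, ?_⟩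
    · rw [hζ]
      exact mem_fixedPts_pi.2 (fun j => by rw [Pi.smul_apply]; exact hzfix (u j))
    · rw [hζ]
      exact X.smul_mem z hu
  have hts_le : ∀ (X : Submodule 𝔄 (Fin n → M)),
      finrank 𝔨 ↥(Submodule.map q (X.restrictScalars 𝔨))
        ≤ finrank 𝔨 ↥(fixedPts p P (Fin n → M) ⊓ X.restrictScalars 𝔨) :=
    fun X => (ht X).le.trans (Submodule.finrank_mono (hζle X))
  have hfixV : finrank 𝔨 ↥(fixedPts p P (Fin n → M)) = n := by
    rw [fixedPts_pi_eq, finrank_piSubK hp, finrank_fixedPts hp hP huni, mul_one]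
  have hJrank : finrank 𝔨 ↥J = n * (ℓ - 1) := by
    rw [hJ_pi, finrank_piSubK hp, chainS_finrank hp huni 1 hlpos]
  have hVrank : finrank 𝔨 (Fin n → M) = n * ℓ := by
    rw [Module.finrank_pi_fintype, Finset.sum_const, Finset.card_univ, Fintype.card_fin,
      smul_eq_mul]
  have hQrank : finrank 𝔨 ((Fin n → M) ⧸ J) = n := by
    have hqr := Submodule.finrank_quotient_add_finrank J
    rw [hJrank, hVrank] at hqr
    have hexp : n * ℓ = n * (ℓ - 1) + n := by
      rw [show ℓ = (ℓ - 1) + 1 from by omega, Nat.mul_add, mul_one, Nat.add_sub_cancel]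
    omega
  -- (1) → (2)
  have one_two : (∃ L : Submodule 𝔄 (Fin n → M), N ⊓ L = ⊥ ∧ N ⊔ L = ⊤) →
      finrank 𝔨 ↥(Submodule.map q (N.restrictScalars 𝔨))
        = finrank 𝔨 ↥(fixedPts p P (Fin n → M) ⊓ N.restrictScalars 𝔨) := by
    rintro ⟨L, hinf, hsup⟩
    have hs_sum : finrank 𝔨 ↥(fixedPts p P (Fin n → M) ⊓ N.restrictScalars 𝔨)
        + finrank 𝔨 ↥(fixedPts p P (Fin n → M) ⊓ L.restrictScalars 𝔨) ≤ n := by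
      have hinf' : (fixedPts p P (Fin n → M) ⊓ N.restrictScalars 𝔨)
          ⊓ (fixedPts p P (Fin n → M) ⊓ L.restrictScalars 𝔨) = ⊥ := by
        rw [Submodule.eq_bot_iff]
        intro x hx
        have hxN : x ∈ N := (Submodule.mem_inf.1 (Submodule.mem_inf.1 hx).1).2
        have hxL : x ∈ L := (Submodule.mem_inf.1 (Submodule.mem_inf.1 hx).2).2
        have : x ∈ N ⊓ L := Submodule.mem_inf.2 ⟨hxN, hxL⟩
        rwa [hinf, Submodule.mem_bot] at this
      have heq := Submodule.finrank_sup_add_finrank_inf_eq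
        (fixedPts p P (Fin n → M) ⊓ N.restrictScalars 𝔨)
        (fixedPts p P (Fin n → M) ⊓ L.restrictScalars 𝔨)
      rw [hinf', finrank_bot, add_zero] at heq
      have hle : (fixedPts p P (Fin n → M) ⊓ N.restrictScalars 𝔨)
          ⊔ (fixedPts p P (Fin n → M) ⊓ L.restrictScalars 𝔨) ≤ fixedPts p P (Fin n → M) :=
        sup_le inf_le_left inf_le_left
      have := Submodule.finrank_mono hle
      rw [hfixV] at this
      omega
    have ht_sum : n ≤ finrank 𝔨 ↥(Submodule.map q (N.restrictScalars 𝔨))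
        + finrank 𝔨 ↥(Submodule.map q (L.restrictScalars 𝔨)) := by
      have hmapsup : Submodule.map q (N.restrictScalars 𝔨)
          ⊔ Submodule.map q (L.restrictScalars 𝔨) = ⊤ := by
        rw [← Submodule.map_sup, ← restrictScalars_sup, hsup, Submodule.restrictScalars_top,
          Submodule.map_top, Submodule.range_mkQ]
      have heq := Submodule.finrank_sup_add_finrank_inf_eq
        (Submodule.map q (N.restrictScalars 𝔨)) (Submodule.map q (L.restrictScalars 𝔨))
      rw [hmapsup] at heq
      have htop : finrank 𝔨 ↥(⊤ : Submodule 𝔨 ((Fin n → M) ⧸ J)) = n := by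
        rw [finrank_top, hQrank]
      omega
    have h1 := hts_le N
    have h2 := hts_le L
    omega
  -- (2) → (3)
  have two_three : finrank 𝔨 ↥(Submodule.map q (N.restrictScalars 𝔨))
        = finrank 𝔨 ↥(fixedPts p P (Fin n → M) ⊓ N.restrictScalars 𝔨) →
      (∃ Z : Set (Fin n), N ⊓ coordSub p P M n Z = ⊥ ∧ N ⊔ coordSub p P M n Z = ⊤) := by
    intro hts
    set D : Fin n → Submodule 𝔨 ((Fin n → M) ⧸ J) :=
      fun i => Submodule.map q ((coordSub p P M n {i}).restrictScalars 𝔨) with hD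
    have hsingle_mem : ∀ (i : Fin n) (m : M), Pi.single i m ∈ coordSub p P M n {i} := by
      intro i m j hj
      have hne : j ≠ i := fun h => hj (show j ∈ ({i} : Set (Fin n)) from h)
      exact Pi.single_eq_of_ne (M := fun _ => M) hne m
    have hcoordsup : (⨆ i, (coordSub p P M n {i}).restrictScalars 𝔨)
        = (⊤ : Submodule 𝔨 (Fin n → M)) := by
      rw [eq_top_iff]
      intro u _
      rw [← Finset.univ_sum_single u]
      apply Submodule.sum_mem
      intro j _
      exact Submodule.mem_iSup_of_mem j (hsingle_mem j (u j))
    have hDsup : (⨆ i, D i) = ⊤ := by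
      rw [hD, ← Submodule.map_iSup, hcoordsup, Submodule.map_top, Submodule.range_mkQ]
    have hDr : ∀ i, finrank 𝔨 ↥(D i) ≤ 1 := by
      intro i
      have hrange : (coordSub p P M n {i}).restrictScalars 𝔨
          = LinearMap.range (LinearMap.single 𝔨 (fun _ : Fin n => M) i) := by
        apply le_antisymm
        · intro u hu
          refine ⟨u i, ?_⟩
          funext j
          rcases eq_or_ne j i with rfl | hji
          · rw [LinearMap.single_apply, Pi.single_eq_same]
          · rw [LinearMap.single_apply, Pi.single_eq_of_ne hji]
            exact (hu j (fun h => hji h)).symm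
        · rintro u ⟨m, rfl⟩
          exact hsingle_mem i m
      have hDi : D i = LinearMap.range (q.comp (LinearMap.single 𝔨 (fun _ : Fin n => M) i)) := by
        rw [hD, LinearMap.range_comp, ← hrange]
      have hker_le : (chainS p P M 1).restrictScalars 𝔨
          ≤ LinearMap.ker (q.comp (LinearMap.single 𝔨 (fun _ : Fin n => M) i)) := by
        intro m hm
        rw [LinearMap.mem_ker, LinearMap.comp_apply, hq, Submodule.mkQ_apply,
          Submodule.Quotient.mk_eq_zero, hJ_pi]
        intro j
        rcases eq_or_ne j i with rfl | hji
        · rw [LinearMap.single_apply, Pi.single_eq_same]; exact hm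
        · rw [LinearMap.single_apply, Pi.single_eq_of_ne hji]; exact Submodule.zero_mem _
      have hrn := LinearMap.finrank_range_add_finrank_ker
        (q.comp (LinearMap.single 𝔨 (fun _ : Fin n => M) i))
      have hker_ge := Submodule.finrank_mono hker_le
      rw [chainS_finrank hp huni 1 hlpos] at hker_ge
      rw [hDi]
      omega
    obtain ⟨Z, hZinf, hZsup⟩ := exists_coord_compl D hDr hDsup
      (Submodule.map q (N.restrictScalars 𝔨))
    have hcoordZ : (coordSub p P M n ↑Z).restrictScalars 𝔨
        = ⨆ i ∈ Z, (coordSub p P M n {i}).restrictScalars 𝔨 := by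
      apply le_antisymm
      · intro u hu
        rw [← Finset.univ_sum_single u]
        apply Submodule.sum_mem
        intro j _
        by_cases hjZ : j ∈ Z
        · exact Submodule.mem_iSup_of_mem j (Submodule.mem_iSup_of_mem hjZ (hsingle_mem j (u j)))
        · have : u j = 0 := hu j (fun h => hjZ (Finset.mem_coe.1 h))
          rw [this, Pi.single_zero]
          exact Submodule.zero_mem _
      · refine iSup_le fun i => iSup_le fun hi => ?_
        intro u hu j hj
        exact hu j (fun hji => hj (by rw [Set.mem_singleton_iff] at hji; rw [hji]; exact hi))
    have hQZ : (⨆ i ∈ Z, D i) = Submodule.map q ((coordSub p P M n ↑Z).restrictScalars 𝔨) := by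
      rw [hcoordZ, hD]
      simp only [Submodule.map_iSup]
    have hmapζN : Submodule.map ζ (N.restrictScalars 𝔨)
        = fixedPts p P (Fin n → M) ⊓ N.restrictScalars 𝔨 := by
      apply Submodule.eq_of_le_of_finrank_le (hζle N)
      rw [← hts, ht N]
    refine ⟨↑Z, ?_, ?_⟩
    · -- N ⊓ coordSub = ⊥
      by_contra hne
      obtain ⟨v, hvmem, hvne, hvfix⟩ := exists_fixed_of_ne_bot hp hP
        (X := N ⊓ coordSub p P M n ↑Z) hne
      have hvN : v ∈ N := (Submodule.mem_inf.1 hvmem).1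
      have hvZ : v ∈ coordSub p P M n ↑Z := (Submodule.mem_inf.1 hvmem).2
      have hvC : v ∈ fixedPts p P (Fin n → M) ⊓ N.restrictScalars 𝔨 :=
        Submodule.mem_inf.2 ⟨hvfix, hvN⟩
      rw [← hmapζN] at hvC
      obtain ⟨w, hwN, hwv⟩ := hvC
      have hwj : ∀ j : Fin n, j ∉ (↑Z : Set (Fin n)) → w j ∈ chainS p P M 1 := by
        intro j hj
        have h0 : v j = 0 := hvZ j hj
        rw [← hwv, hζj] at h0
        exact (hzker (w j)).1 h0
      set wZ : Fin n → M := fun j => if j ∈ Z then w j else 0 with hwZ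
      have hwZmem : wZ ∈ coordSub p P M n ↑Z := by
        intro j hj
        show (if j ∈ Z then w j else 0) = 0
        exact if_neg (fun h => hj (Finset.mem_coe.2 h))
      have hdiff : w - wZ ∈ J := by
        rw [hJ_pi]
        intro j
        rw [Pi.sub_apply]
        show w j - (if j ∈ Z then w j else 0) ∈ _
        by_cases hjZ : j ∈ Z
        · rw [if_pos hjZ, sub_self]; exact Submodule.zero_mem _
        · rw [if_neg hjZ, sub_zero]
          exact hwj j (fun h => hjZ (Finset.mem_coe.1 h))
      have hqw : q w ∈ Submodule.map q (N.restrictScalars 𝔨) ⊓ (⨆ i ∈ Z, D i) := by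
        refine Submodule.mem_inf.2 ⟨⟨w, hwN, rfl⟩, ?_⟩
        rw [hQZ]
        have hqeq : q w = q wZ := by
          rw [hq, Submodule.mkQ_apply, Submodule.mkQ_apply]
          exact (Submodule.Quotient.eq J).2 hdiff
        rw [hqeq]
        exact ⟨wZ, hwZmem, rfl⟩
      rw [hZinf] at hqw
      have hwJ : w ∈ J := by
        rw [← hkerq, LinearMap.mem_ker]
        exact (Submodule.mem_bot _).1 hqw
      apply hvne
      rw [← hwv]
      funext j
      rw [hζj]
      exact (hzker (w j)).2 ((hJ_pi ▸ hwJ) j)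
    · -- N ⊔ coordSub = ⊤
      have hsupQ : Submodule.map q ((N ⊔ coordSub p P M n ↑Z).restrictScalars 𝔨) = ⊤ := by
        rw [_root_.restrictScalars_sup, Submodule.map_sup, ← hQZ]
        exact hZsup
      have hk := (Submodule.map_mkQ_eq_top J _).1 hsupQ
      have hWA : (N ⊔ coordSub p P M n ↑Z) ⊔ chainS p P (Fin n → M) 1 = ⊤ := by
        rw [eq_top_iff]
        intro u _
        have hu : u ∈ J ⊔ (N ⊔ coordSub p P M n ↑Z).restrictScalars 𝔨 := by
          rw [hk]; exact Submodule.mem_top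
        obtain ⟨a, ha, b, hb, rfl⟩ := Submodule.mem_sup.1 hu
        have haJ : a ∈ chainS p P (Fin n → M) 1 := by
          rw [chainS_one]; exact ha
        rw [add_comm]
        exact Submodule.add_mem_sup hb haJ
      have hbotV : ∃ i, chainS p P (Fin n → M) i = ⊥ :=
        ⟨ℓ, by rw [chainS_pi, hldef, chainS_finrank_eq_bot hp huni, piSub_bot]⟩
      exact eq_top_of_sup_bracket hbotV hWA
  exact ⟨⟨one_two, fun h2 => (two_three h2).elim fun Z hZ => ⟨coordSub p P M n Z, hZ⟩⟩,
    ⟨fun h1 => two_three (one_two h1), fun h3 => h3.elim fun Z hZ => ⟨coordSub p P M n Z, hZ⟩⟩⟩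

end Chunk8

section Chunk9
open Submodule MonoidAlgebra
local notation "𝔨" => ZMod p
local notation "𝔄" => MonoidAlgebra (ZMod p) P
variable {p P M} {n : ℕ}

lemma semidirect_part (N L : Submodule 𝔄 (Fin n → M)) (hinf : N ⊓ L = ⊥) (hsup : N ⊔ L = ⊤) :
    liftSub p P M n N ⊓ semiCompl p P M n L = ⊥ ∧
      liftSub p P M n N ⊔ semiCompl p P M n L = ⊤ := by
  -- the subgroup {x | x.left.toAdd ∈ L}
  set H : Subgroup (SDP p P M n) :=
    { carrier := {x | x.left.toAdd ∈ L}
      one_mem' := by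
        show (1 : SDP p P M n).left.toAdd ∈ L
        simp only [SemidirectProduct.one_left]
        exact L.zero_mem
      mul_mem' := by
        intro a b ha hb
        show (a * b).left.toAdd ∈ L
        rw [SemidirectProduct.mul_left]
        show a.left.toAdd + (pMulAut p P M n a.right b.left).toAdd ∈ L
        have : (pMulAut p P M n a.right b.left).toAdd
            = of 𝔨 P a.right • b.left.toAdd := rfl
        rw [this]
        exact L.add_mem ha (L.smul_mem _ hb)
      inv_mem' := by
        intro a ha
        show (a⁻¹).left.toAdd ∈ L
        rw [SemidirectProduct.inv_left]
        show of 𝔨 P a.right⁻¹ • (a.left⁻¹).toAdd ∈ L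
        have : (a.left⁻¹).toAdd = - a.left.toAdd := rfl
        rw [this]
        exact L.smul_mem _ (L.neg_mem ha) } with hH
  have hmemH : ∀ x : SDP p P M n, x ∈ H ↔ x.left.toAdd ∈ L := fun _ => Iff.rfl
  have hcompl_le : semiCompl p P M n L ≤ H := by
    rw [semiCompl, sup_le_iff]
    constructor
    · rintro x hx
      obtain ⟨y, hy, rfl⟩ := Subgroup.mem_map.1 hx
      rw [hmemH]
      show ((SemidirectProduct.inl y : SDP p P M n)).left.toAdd ∈ L
      rw [SemidirectProduct.left_inl]
      exact hy
    · rintro x ⟨g, rfl⟩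
      rw [hmemH]
      show ((SemidirectProduct.inr g : SDP p P M n)).left.toAdd ∈ L
      rw [SemidirectProduct.left_inr, toAdd_one]
      exact L.zero_mem
  have hlift_mem : ∀ x : SDP p P M n, x ∈ liftSub p P M n N ↔
      x.right = 1 ∧ x.left.toAdd ∈ N := by
    intro x
    rw [liftSub, Subgroup.mem_map]
    constructor
    · rintro ⟨y, hy, rfl⟩
      refine ⟨SemidirectProduct.right_inl y, ?_⟩
      rw [SemidirectProduct.left_inl]
      exact hy
    · rintro ⟨hr, hl⟩
      refine ⟨x.left, hl, ?_⟩
      ext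
      · rw [SemidirectProduct.left_inl]
      · rw [SemidirectProduct.right_inl, hr]
  constructor
  · rw [eq_bot_iff]
    intro x hx
    obtain ⟨hxN, hxH⟩ := Subgroup.mem_inf.1 hx
    obtain ⟨hr, hl⟩ := (hlift_mem x).1 hxN
    have hxL : x.left.toAdd ∈ L := (hmemH x).1 (hcompl_le hxH)
    have : x.left.toAdd ∈ N ⊓ L := Submodule.mem_inf.2 ⟨hl, hxL⟩
    rw [hinf, Submodule.mem_bot] at this
    rw [Subgroup.mem_bot]
    ext : 1
    · rw [SemidirectProduct.one_left]
      exact congrArg Multiplicative.ofAdd this  -- x.left = 1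
    · rw [SemidirectProduct.one_right]  -- maybe one_right doesn't exist
      exact hr
  · rw [eq_top_iff]
    intro x _
    have hx : x.left.toAdd ∈ N ⊔ L := by rw [hsup]; exact Submodule.mem_top
    obtain ⟨a, ha, b, hb, hab⟩ := Submodule.mem_sup.1 hx
    have hxfact : x = SemidirectProduct.inl (Multiplicative.ofAdd a)
        * (SemidirectProduct.inl (Multiplicative.ofAdd b) * SemidirectProduct.inr x.right) := by
      rw [← mul_assoc, ← map_mul]
      ext : 1
      · rw [SemidirectProduct.mul_left, SemidirectProduct.left_inl, SemidirectProduct.right_inl]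
        show _ = (Multiplicative.ofAdd a * Multiplicative.ofAdd b)
          * (pMulAut p P M n 1 (1 : Multiplicative (Fin n → M)))
        rw [map_one]
        show x.left = (Multiplicative.ofAdd a * Multiplicative.ofAdd b) * 1
        rw [mul_one]
        have : Multiplicative.ofAdd a * Multiplicative.ofAdd b = Multiplicative.ofAdd (a + b) := rfl
        rw [this, hab]
        exact (ofAdd_toAdd x.left).symm
      · rw [SemidirectProduct.mul_right, SemidirectProduct.right_inl, SemidirectProduct.right_inr,
          one_mul]
    have h1 : SemidirectProduct.inl (φ := pMulAut p P M n) (Multiplicative.ofAdd a)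
        ∈ liftSub p P M n N :=
      Subgroup.mem_map.2 ⟨Multiplicative.ofAdd a, ha, rfl⟩
    have h2 : SemidirectProduct.inl (φ := pMulAut p P M n) (Multiplicative.ofAdd b)
        ∈ semiCompl p P M n L := by
      rw [semiCompl]
      exact Subgroup.mem_sup_left (Subgroup.mem_map.2 ⟨Multiplicative.ofAdd b, hb, rfl⟩)
    have h3 : SemidirectProduct.inr (φ := pMulAut p P M n) x.right ∈ semiCompl p P M n L := by
      rw [semiCompl]
      exact Subgroup.mem_sup_right ⟨x.right, rfl⟩
    rw [hxfact]
    exact Subgroup.mul_mem _ (Subgroup.mem_sup_left h1)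
      (Subgroup.mul_mem _ (Subgroup.mem_sup_right h2) (Subgroup.mem_sup_right h3))

end Chunk9

/-- Let `P` be a finite `p`-group and `M` a nonzero finite-dimensional `F_p P`-module
on which `P` acts uniserially.  For a submodule `N` of `M^n` the following are
equivalent: (1) `N` is a direct summand of `M^n`; (2) `(N + [P,M^n])/[P,M^n]` and
`C_N(P)` have the same `F_p`-dimension; (3) `M^n = N ⊕ M_Z` for some subset
`Z ⊆ {1, …, n}`.  Moreover, for any complement `L` of `N` in `M^n`, the subgroup
`L ⋊ P` is a complement of `N` in `M^n ⋊ P`. -/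
theorem direct_summand_tfae_and_semidirect_complement
    (hp : p.Prime) [Finite P] (hP : IsPGroup p P)
    [Module.Finite (ZMod p) M] [Nontrivial M]
    (huni : UniserialFpP p P M)
    (N : Submodule (MonoidAlgebra (ZMod p) P) (Fin n → M)) :
    (((∃ L : Submodule (MonoidAlgebra (ZMod p) P) (Fin n → M),
        N ⊓ L = ⊥ ∧ N ⊔ L = ⊤) ↔
      Module.finrank (ZMod p)
        ↥(Submodule.map
            ((bracketSub p P (Fin n → M)
              (⊤ : Submodule (MonoidAlgebra (ZMod p) P) (Fin n → M))).restrictScalars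
                (ZMod p)).mkQ
            (N.restrictScalars (ZMod p)))
        = Module.finrank (ZMod p)
            ↥(fixedPts p P (Fin n → M) ⊓ N.restrictScalars (ZMod p))) ∧
    ((∃ L : Submodule (MonoidAlgebra (ZMod p) P) (Fin n → M),
        N ⊓ L = ⊥ ∧ N ⊔ L = ⊤) ↔
      (∃ Z : Set (Fin n),
        N ⊓ coordSub p P M n Z = ⊥ ∧ N ⊔ coordSub p P M n Z = ⊤))) ∧
    (∀ L : Submodule (MonoidAlgebra (ZMod p) P) (Fin n → M),
      N ⊓ L = ⊥ → N ⊔ L = ⊤ →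
      liftSub p P M n N ⊓ semiCompl p P M n L = ⊥ ∧
      liftSub p P M n N ⊔ semiCompl p P M n L = ⊤) := by
  exact ⟨module_part hp hP huni n N, fun L h1 h2 => semidirect_part N L h1 h2⟩
end

section
/- Let p be a prime, Q a finite p-group, and P = Q ≀ C_p = Q^p ⋊ C_p the wreath product with base group B = Q^p, where the generator of C_p permutes the p factors of B cyclically. Suppose x ∈ P ∖ B, y ∈ B centralizes x, and y^p = 1. Then y lies in the commutator subgroup [P,P]. -/
/-- The automorphism of `Q^p = (ZMod p → Q)` cyclically shifting coordinates by `c`. -/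
def shiftAut (p : ℕ) (Q : Type) [Group Q] (c : ZMod p) : MulAut (ZMod p → Q) where
  toFun x := fun i => x (i - c)
  invFun x := fun i => x (i + c)
  left_inv x := by funext i; simp
  right_inv x := by funext i; simp
  map_mul' x y := rfl

/-- The action of the cyclic group `C_p` on `Q^p` by cyclic coordinate shifts. -/
def shiftHom (p : ℕ) (Q : Type) [Group Q] :
    Multiplicative (ZMod p) →* MulAut (ZMod p → Q) :=
  MonoidHom.mk' (fun c => shiftAut p Q c.toAdd) (by
    intro a b
    apply MulEquiv.ext
    intro x
    funext i
    show x (i - (a * b).toAdd) = x (i - a.toAdd - b.toAdd)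
    rw [sub_sub]
    rfl)

/-- The wreath product `Q ≀ C_p` with base group `B = Q^p`, where a generator of
`C_p` cyclically permutes the `p` factors of `B`. -/
abbrev WreathCp (p : ℕ) (Q : Type) [Group Q] :=
  SemidirectProduct (ZMod p → Q) (Multiplicative (ZMod p)) (shiftHom p Q)

section Aux

variable (p : ℕ) (Q : Type) [Group Q]

/-- image in the abelianization of `mulSingle` elements is shift-invariant -/
theorem aux_single_shift [NeZero p] (i : ZMod p) (q : Q) :
    Abelianization.of (SemidirectProduct.inl (φ := shiftHom p Q) (Pi.mulSingle i q)) =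
      Abelianization.of (SemidirectProduct.inl (φ := shiftHom p Q) (Pi.mulSingle 0 q)) := by
  have h := SemidirectProduct.inl_aut (φ := shiftHom p Q) (Multiplicative.ofAdd i)
      (Pi.mulSingle 0 q)
  have hs : (shiftHom p Q (Multiplicative.ofAdd i)) (Pi.mulSingle 0 q) = Pi.mulSingle i q := by
    funext j
    have hrfl : ((shiftHom p Q) (Multiplicative.ofAdd i)) (Pi.mulSingle 0 q) j =
        Pi.mulSingle (M := fun _ : ZMod p => Q) 0 q (j - i) := rfl
    rw [hrfl]
    by_cases hj : j = i
    · subst hj; rw [sub_self]; simp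
    · rw [Pi.mulSingle_eq_of_ne (by simpa [sub_eq_zero] using hj),
        Pi.mulSingle_eq_of_ne hj]
  rw [hs] at h
  rw [h]
  simp [mul_comm]

theorem aux_hom_prod {I : Type} [Fintype I] [DecidableEq I] {Q' M : Type} [Group Q']
    [CommMonoid M] (ψ : (I → Q') →* M) (f : I → Q') :
    ψ f = ∏ i : I, ψ (Pi.mulSingle i (f i)) := by
  have key : ∀ s : Finset I, ψ (fun i => if i ∈ s then f i else 1) =
      ∏ i ∈ s, ψ (Pi.mulSingle i (f i)) := by
    intro s
    induction s using Finset.induction_on with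
    | empty =>
        have h1 : (fun i => if i ∈ (∅ : Finset I) then f i else 1) = (1 : I → Q') := by
          funext i; simp
        rw [h1, map_one, Finset.prod_empty]
    | @insert a s ha ih =>
        have hsplit : (fun i => if i ∈ insert a s then f i else 1) =
            Pi.mulSingle a (f a) * (fun i => if i ∈ s then f i else 1) := by
          funext i
          by_cases h : i = a
          · subst h
            simp [ha]
          · simp [h, Pi.mulSingle_eq_of_ne h]
        rw [hsplit, map_mul, ih, Finset.prod_insert ha]
  have h2 := key Finset.univ
  simpa using h2

theorem aux_prod_single [NeZero p] (f : ZMod p → Q) :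
    Abelianization.of (SemidirectProduct.inl (φ := shiftHom p Q) f) =
      ∏ i : ZMod p,
        Abelianization.of (SemidirectProduct.inl (φ := shiftHom p Q) (Pi.mulSingle i (f i))) := by
  exact aux_hom_prod
    ((Abelianization.of (G := WreathCp p Q)).comp
      (SemidirectProduct.inl (φ := shiftHom p Q))) f

end Aux

/-- Let `P = Q ≀ C_p` with base group `B = Q^p`.  If `x ∈ P ∖ B`, `y ∈ B`
centralizes `x`, and `y^p = 1`, then `y` lies in the commutator subgroup of `P`. -/
theorem mem_commutator_of_base_centralizes (p : ℕ) (hp : p.Prime)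
    (Q : Type) [Group Q] [Finite Q] (hQ : IsPGroup p Q)
    (x y : WreathCp p Q)
    (hx : x ∉ (SemidirectProduct.inl : (ZMod p → Q) →* WreathCp p Q).range)
    (hy : y ∈ (SemidirectProduct.inl : (ZMod p → Q) →* WreathCp p Q).range)
    (hxy : x * y = y * x) (hyp : y ^ p = 1) :
    y ∈ commutator (WreathCp p Q) := by
  haveI : Fact p.Prime := ⟨hp⟩
  obtain ⟨f, rfl⟩ := hy
  -- the shift amount of x is nonzero
  set c : ZMod p := Multiplicative.toAdd x.right with hc
  have hcne : c ≠ 0 := by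
    intro h
    apply hx
    rw [SemidirectProduct.range_inl_eq_ker_rightHom, MonoidHom.mem_ker]
    show x.right = 1
    have : Multiplicative.toAdd x.right = 0 := h
    simpa using this
  -- the commuting relation coordinate-wise
  have hconj : ∀ i : ZMod p, f i = x.left i * f (i - c) * (x.left i)⁻¹ := by
    intro i
    have h1 : (x * SemidirectProduct.inl f).left = (SemidirectProduct.inl f * x).left := by
      rw [hxy]
    simp only [SemidirectProduct.mul_left, SemidirectProduct.left_inl,
      SemidirectProduct.right_inl] at h1
    have h2 := congrFun h1 i
    have hsh : (shiftHom p Q x.right) f i = f (i - c) := rfl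
    rw [map_one] at h2
    simp only [Pi.mul_apply, hsh, MulAut.one_apply] at h2
    exact eq_mul_inv_of_mul_eq h2.symm
  -- f^p = 1 pointwise
  have hfp : ∀ i, f i ^ p = 1 := by
    intro i
    have : SemidirectProduct.inl (φ := shiftHom p Q) (f ^ p) = 1 := by
      rw [map_pow]; exact hyp
    have hf1 : f ^ p = 1 := SemidirectProduct.inl_injective this
    exact congrFun hf1 i
  -- work in the abelianization
  set π := (Abelianization.of : WreathCp p Q →* Abelianization (WreathCp p Q))
  let g : ZMod p → Abelianization (WreathCp p Q) := fun i =>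
    π (SemidirectProduct.inl (φ := shiftHom p Q) (Pi.mulSingle 0 (f i)))
  have hgshift : ∀ i, g i = g (i - c) := by
    intro i
    have h0 := aux_single_shift p Q i (f i)
    have h1 := aux_single_shift p Q (i - c) (f (i - c))
    show π _ = π _
    calc π (SemidirectProduct.inl (φ := shiftHom p Q) (Pi.mulSingle 0 (f i)))
        = π (SemidirectProduct.inl (φ := shiftHom p Q)
            (Pi.mulSingle 0 (x.left i * f (i - c) * (x.left i)⁻¹))) := by rw [← hconj i]
      _ = π (SemidirectProduct.inl (φ := shiftHom p Q) (Pi.mulSingle 0 (f (i - c)))) := by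
          have : (Pi.mulSingle (0 : ZMod p) (x.left i * f (i - c) * (x.left i)⁻¹)
              : ZMod p → Q) =
              Pi.mulSingle 0 (x.left i) * Pi.mulSingle 0 (f (i - c)) *
                (Pi.mulSingle 0 (x.left i))⁻¹ := by
            rw [← Pi.mulSingle_inv, ← Pi.mulSingle_mul, ← Pi.mulSingle_mul]
          rw [this, map_mul, map_mul, map_inv, map_mul, map_mul, map_inv, mul_comm, ← mul_assoc]
          simp
  -- g is constant
  have hgconst : ∀ i, g i = g 0 := by
    have key : ∀ (n : ℕ) (i : ZMod p), g i = g (i - n • c) := by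
      intro n
      induction n with
      | zero => simp
      | succ k ih =>
        intro i
        rw [hgshift i, ih (i - c)]
        congr 1
        rw [succ_nsmul]
        ring
    intro i
    have hcu : IsUnit c := by
      rwa [isUnit_iff_ne_zero]
    set n : ℕ := (i * c⁻¹).val with hn
    rw [key n i]
    congr 1
    have h1 : (n • c : ZMod p) = (n : ZMod p) * c := by
      simp [nsmul_eq_mul]
    rw [h1, hn, ZMod.natCast_val, ZMod.cast_id, inv_mul_cancel_right₀ hcne, sub_self]
  -- conclude
  have hπy : π (SemidirectProduct.inl (φ := shiftHom p Q) f) = 1 := by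
    rw [aux_prod_single p Q f]
    have : ∀ i : ZMod p,
        π (SemidirectProduct.inl (φ := shiftHom p Q) (Pi.mulSingle i (f i))) = g i := by
      intro i
      exact aux_single_shift p Q i (f i)
    rw [Finset.prod_congr rfl (fun i _ => this i)]
    rw [Finset.prod_congr rfl (fun i _ => hgconst i)]
    rw [Finset.prod_const]
    have hcard : Fintype.card (ZMod p) = p := ZMod.card p
    rw [Finset.card_univ, hcard]
    show (π _) ^ p = 1
    rw [← map_pow, ← map_pow]
    have : (Pi.mulSingle (0 : ZMod p) (f 0)) ^ p =
        (Pi.mulSingle (0 : ZMod p) (f 0 ^ p) : ZMod p → Q) := by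
      rw [Pi.mulSingle_pow]
    rw [this, hfp 0]
    simp
  exact (QuotientGroup.eq_one_iff _).mp hπy
end
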